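/- Let M be an M×M row-stochastic irreducible matrix and D = diag(d₁,…,d_M) with d_i ∈ [0,1], D ≠ 0 and D ≠ I, and assume ρ(DM) > 0. Then there exist η > 0, indices j, k ∈ {1,…,M}, a period l ∈ ℕ and N ∈ ℕ such that for all i ≥ N, max_{l'∈{0,…,l−1}} [(DM)^(i+l') (I−D)M]_{j,k} ≥ η·ρ(DM)^i. -/

import Mathlib

noncomputable def specRad {n : ℕ} (Z : Matrix (Fin n) (Fin n) ℂ) : ℝ :=
  ⨆ μ ∈ spectrum ℂ Z, ‖μ‖

noncomputable def specRadR {n : ℕ} (Z : Matrix (Fin n) (Fin n) ℝ) : ℝ :=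
  specRad (Z.map Complex.ofReal)

def Irred {n : ℕ} (Z : Matrix (Fin n) (Fin n) ℝ) : Prop :=
  ∀ j k : Fin n, ∃ m : ℕ, 0 < m ∧ 0 < (Z ^ m) j k

open Matrix Finset

attribute [local instance] Matrix.linftyOpNormedRing Matrix.linftyOpNormedAlgebra

set_option maxHeartbeats 1000000

namespace StmtAux

variable {n : ℕ}

lemma pow_entry_nonneg (X : Matrix (Fin n) (Fin n) ℝ) (hX : ∀ i j, 0 ≤ X i j) (s : ℕ) :
    ∀ i j, 0 ≤ (X ^ s) i j := by
  induction s with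
  | zero => intro i j; rw [pow_zero, Matrix.one_apply]; split <;> norm_num
  | succ s ih =>
    intro i j
    rw [pow_succ, Matrix.mul_apply]
    exact Finset.sum_nonneg fun q _ => mul_nonneg (ih i q) (hX q j)

lemma mul_single_le (X Y : Matrix (Fin n) (Fin n) ℝ) (hX : ∀ i j, 0 ≤ X i j)
    (hY : ∀ i j, 0 ≤ Y i j) (i q k : Fin n) : X i q * Y q k ≤ (X * Y) i k := by
  rw [Matrix.mul_apply]
  exact Finset.single_le_sum (f := fun w => X i w * Y w k)
    (fun w _ => mul_nonneg (hX _ _) (hY _ _)) (Finset.mem_univ q)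

lemma pow_le_pow_entry (X Y : Matrix (Fin n) (Fin n) ℝ) (hX : ∀ i j, 0 ≤ X i j)
    (hXY : ∀ i j, X i j ≤ Y i j) (s : ℕ) : ∀ i j, (X ^ s) i j ≤ (Y ^ s) i j := by
  induction s with
  | zero => intro i j; rw [pow_zero, pow_zero]
  | succ s ih =>
    intro i j
    rw [pow_succ, pow_succ, Matrix.mul_apply, Matrix.mul_apply]
    refine Finset.sum_le_sum fun q _ => mul_le_mul (ih i q) (hXY q j) (hX q j)
      (le_trans (pow_entry_nonneg X hX s i q) (ih i q))

lemma exists_pos_term {f : Fin n → ℝ} (hnn : ∀ i, 0 ≤ f i) (hpos : 0 < ∑ i, f i) :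
    ∃ i, 0 < f i := by
  by_contra h
  push_neg at h
  have : ∑ i, f i ≤ 0 := Finset.sum_nonpos fun i _ => h i
  linarith

lemma pos_of_mul_pos' {a b : ℝ} (ha : 0 ≤ a) (hb : 0 ≤ b) (h : 0 < a * b) :
    0 < a ∧ 0 < b := by
  rcases mul_pos_iff.mp h with ⟨h1, h2⟩ | ⟨h1, h2⟩
  · exact ⟨h1, h2⟩
  · linarith



lemma nsl_mul (R : Set ℕ) (hadd : ∀ a ∈ R, ∀ b ∈ R, a + b ∈ R) (a : ℕ) (ha : a ∈ R) :
    ∀ k, 1 ≤ k → k * a ∈ R := by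
  intro k hk
  induction k with
  | zero => omega
  | succ k ih =>
    rcases Nat.eq_zero_or_pos k with hk0 | hk0
    · subst hk0; simpa using ha
    · have := hadd _ (ih hk0) _ ha
      simpa [Nat.succ_mul] using this

lemma nsl_key (R : Set ℕ) (hadd : ∀ a ∈ R, ∀ b ∈ R, a + b ∈ R)
    (g : ℕ) (hg : 0 < g) (N : ℕ) (hN : ∀ k, N ≤ k → k * g ∈ R)
    (a : ℕ) (ha : a ∈ R) (hapos : 0 < a) :
    ∃ N', ∀ k, N' ≤ k → k * Nat.gcd g a ∈ R := by
  set h := Nat.gcd g a with hh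
  have hhpos : 0 < h := Nat.gcd_pos_of_pos_left a hg
  have hdg : h ∣ g := Nat.gcd_dvd_left g a
  have hda : h ∣ a := Nat.gcd_dvd_right g a
  set g' := g / h with hg'
  set a' := a / h with ha'
  have hgg : g' * h = g := Nat.div_mul_cancel hdg
  have haa : a' * h = a := Nat.div_mul_cancel hda
  have hg'pos : 0 < g' := by
    rcases Nat.eq_zero_or_pos g' with h0 | h0
    · rw [h0] at hgg; omega
    · exact h0
  have ha'pos : 0 < a' := by
    rcases Nat.eq_zero_or_pos a' with h0 | h0
    · rw [h0] at haa; omega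
    · exact h0
  rcases Nat.eq_or_lt_of_le hg'pos with hg1 | hg2
  · -- g' = 1, so h = g
    have hhg : h = g := by rw [← hg1] at hgg; simpa using hgg
    exact ⟨N, fun k hk => by rw [hhg]; exact hN k hk⟩
  · -- g' ≥ 2
    have cop : Nat.Coprime g' a' := Nat.coprime_div_gcd_div_gcd hhpos
    haveI : NeZero g' := ⟨by omega⟩
    refine ⟨N * g' + 2 * g' * a', fun k hk => ?_⟩
    -- find y with 1 ≤ y < 2 g' and y * a' ≡ k [MOD g']
    have copa : Nat.Coprime a' g' := cop.symm
    set b : ZMod g' := (k : ZMod g') * ((ZMod.unitOfCoprime a' copa)⁻¹ : (ZMod g')ˣ) with hb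
    set y := b.val + g' with hy
    have hbval : b.val < g' := ZMod.val_lt b
    have hy1 : 1 ≤ y := by omega
    have hy2 : y < 2 * g' := by omega
    -- congruence : (y * a') ≡ k [MOD g']
    have hcong : ((y * a' : ℕ) : ZMod g') = (k : ZMod g') := by
      push_cast [hy]
      rw [ZMod.natCast_val, ZMod.cast_id]
      have : ((g' : ℕ) : ZMod g') = 0 := ZMod.natCast_self g'
      rw [this, add_zero, hb]
      have hu : ((ZMod.unitOfCoprime a' copa : (ZMod g')ˣ) : ZMod g') = (a' : ZMod g') :=
        ZMod.coe_unitOfCoprime a' copa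
      calc (k : ZMod g') * ((ZMod.unitOfCoprime a' copa)⁻¹ : (ZMod g')ˣ) * (a' : ZMod g')
          = (k : ZMod g') * (((ZMod.unitOfCoprime a' copa)⁻¹ : (ZMod g')ˣ) *
            ((ZMod.unitOfCoprime a' copa : (ZMod g')ˣ) : ZMod g')) := by rw [hu]; ring
        _ = (k : ZMod g') := by
            rw [← Units.val_mul, inv_mul_cancel]; simp
    have hyak : y * a' ≤ k := by
      have : y * a' ≤ 2 * g' * a' := by
        have := Nat.mul_le_mul_right a' (le_of_lt hy2)
        omega
      omega
    have hmod : (y * a') % g' = k % g' := by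
      have := (ZMod.natCast_eq_natCast_iff (y * a') k g').mp hcong
      exact this
    have hdvd : g' ∣ k - y * a' := (Nat.modEq_iff_dvd' hyak).mp hmod
    obtain ⟨x, hx⟩ := hdvd
    have hxN : N ≤ x := by
      have h1 : y * a' ≤ 2 * g' * a' := by
        have := Nat.mul_le_mul_right a' (le_of_lt hy2); omega
      have h3 : g' * N ≤ g' * x := by rw [mul_comm g' N]; omega
      exact Nat.le_of_mul_le_mul_left h3 hg'pos
    -- k * h = x * g + y * a
    have hkeq : k * h = x * g + y * a := by
      have hk' : k = g' * x + y * a' := by omega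
      calc k * h = (g' * x + y * a') * h := by rw [← hk']
        _ = x * (g' * h) + y * (a' * h) := by ring
        _ = x * g + y * a := by rw [hgg, haa]
    rw [hkeq]
    exact hadd _ (hN x hxN) _ (nsl_mul R hadd a ha y hy1)

lemma nsl (R : Set ℕ) (hadd : ∀ a ∈ R, ∀ b ∈ R, a + b ∈ R) (hpos : ∀ a ∈ R, 0 < a)
    (r : ℕ) (hr : r ∈ R) :
    ∃ g N, 0 < g ∧ (∀ a ∈ R, g ∣ a) ∧ ∀ k, N ≤ k → k * g ∈ R := by
  set P : ℕ → Prop := fun g => 0 < g ∧ ∃ N, ∀ k, N ≤ k → k * g ∈ R with hP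
  have hPr : P r := ⟨hpos r hr, 1, fun k hk => nsl_mul R hadd r hr k hk⟩
  have hne : {g | P g}.Nonempty := ⟨r, hPr⟩
  set g₀ := sInf {g | P g} with hg₀
  have hPg₀ : P g₀ := Nat.sInf_mem hne
  obtain ⟨hg₀pos, N, hN⟩ := hPg₀
  refine ⟨g₀, N, hg₀pos, fun a ha => ?_, hN⟩
  have hkey : P (Nat.gcd g₀ a) := by
    obtain ⟨N', hN'⟩ := nsl_key R hadd g₀ hg₀pos N hN a ha (hpos a ha)
    exact ⟨Nat.gcd_pos_of_pos_left a hg₀pos, N', hN'⟩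
  have h1 : g₀ ≤ Nat.gcd g₀ a := Nat.sInf_le hkey
  have h2 : Nat.gcd g₀ a ≤ g₀ := Nat.le_of_dvd hg₀pos (Nat.gcd_dvd_left g₀ a)
  have : Nat.gcd g₀ a = g₀ := le_antisymm h2 h1
  rw [← this]
  exact Nat.gcd_dvd_right g₀ a




variable {n : ℕ}

/-- Core lemma: from a positive super-eigenvector inequality, get a periodic
diagonal lower bound with the exact rate. -/
lemma core (B : Matrix (Fin n) (Fin n) ℝ) (hB : ∀ i j, 0 ≤ B i j)
    (ρ : ℝ) (hρpos : 0 < ρ) (u : Fin n → ℝ) (hu : ∀ i, 0 ≤ u i) (hune : ∃ i, 0 < u i)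
    (heig : ∀ x, ρ * u x ≤ ∑ y, B x y * u y) :
    ∃ (x : Fin n) (L : ℕ) (ε : ℝ), 0 < L ∧ 0 < ε ∧
      ∀ s : ℕ, 1 ≤ s → ε * ρ ^ (s * L) ≤ (B ^ (s * L)) x x := by
  classical
  set E : Fin n → Fin n → Prop := fun a b => 0 < B a b ∧ 0 < u b with hE
  -- each point of the support has a successor in the support
  have hout : ∀ x, 0 < u x → ∃ y, E x y := by
    intro x hx
    have h1 : 0 < ∑ y, B x y * u y := lt_of_lt_of_le (mul_pos hρpos hx) (heig x)
    obtain ⟨y, hy⟩ := exists_pos_term (fun y => mul_nonneg (hB x y) (hu y)) h1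
    obtain ⟨h2, h3⟩ := pos_of_mul_pos' (hB x y) (hu y) hy
    exact ⟨y, h2, h3⟩
  -- minimal closed subset of the support
  set F : Finset (Fin n) → Prop := fun c => c.Nonempty ∧ (∀ a ∈ c, 0 < u a) ∧
      (∀ a ∈ c, ∀ b, E a b → b ∈ c) with hF
  have hS : F (Finset.univ.filter fun y => 0 < u y) := by
    obtain ⟨i, hi⟩ := hune
    refine ⟨⟨i, by simp [hi]⟩, fun a ha => (Finset.mem_filter.mp ha).2, ?_⟩
    intro a _ b hb
    simp [hb.2]
  have hKne : {k | ∃ c, F c ∧ c.card = k}.Nonempty := ⟨_, _, hS, rfl⟩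
  obtain ⟨c, hc, hcard⟩ := Nat.sInf_mem hKne
  have hmin : ∀ c', F c' → sInf {k | ∃ c, F c ∧ c.card = k} ≤ c'.card :=
    fun c' h => Nat.sInf_le ⟨c', h, rfl⟩
  -- strong connectivity of c
  have hconn : ∀ x ∈ c, ∀ y ∈ c, Relation.ReflTransGen E x y := by
    intro x hx y hy
    set c' := c.filter (fun z => Relation.ReflTransGen E x z) with hc'
    have hsub : c' ⊆ c := Finset.filter_subset _ _
    have hFc' : F c' := by
      refine ⟨⟨x, Finset.mem_filter.mpr ⟨hx, Relation.ReflTransGen.refl⟩⟩,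
        fun a ha => hc.2.1 a (hsub ha), ?_⟩
      intro a ha b hab
      have ha' := Finset.mem_filter.mp ha
      exact Finset.mem_filter.mpr ⟨hc.2.2 a ha'.1 b hab, ha'.2.tail hab⟩
    have hle : c.card ≤ c'.card := by
      rw [hcard]; exact hmin c' hFc'
    have : c' = c := Finset.eq_of_subset_of_card_le hsub hle
    rw [← this] at hy
    exact (Finset.mem_filter.mp hy).2
  -- restricted matrix
  set A : Matrix (Fin n) (Fin n) ℝ :=
    Matrix.of (fun a b => if a ∈ c ∧ b ∈ c then B a b else 0) with hA
  have hAapp : ∀ a b, A a b = if a ∈ c ∧ b ∈ c then B a b else 0 := fun a b => rfl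
  have hA0 : ∀ i j, 0 ≤ A i j := by
    intro i j; rw [hAapp]; split
    · exact hB i j
    · exact le_refl 0
  have hAB : ∀ i j, A i j ≤ B i j := by
    intro i j; rw [hAapp]; split
    · exact le_refl _
    · exact hB i j
  -- support of powers
  have hsupp : ∀ t, 1 ≤ t → ∀ p q : Fin n, q ∉ c → (A ^ t) p q = 0 := by
    intro t ht p q hq
    obtain ⟨t', rfl⟩ := Nat.exists_eq_add_of_le ht
    rw [add_comm, pow_succ, Matrix.mul_apply]
    refine Finset.sum_eq_zero fun w _ => ?_
    rw [hAapp]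
    simp [hq]
  have hmemc : ∀ t (p q : Fin n), p ∈ c → 0 < (A ^ t) p q → q ∈ c := by
    intro t p q hp hpos
    rcases Nat.eq_zero_or_pos t with rfl | ht
    · rw [pow_zero, Matrix.one_apply] at hpos
      by_contra hq
      have : p ≠ q := fun h => hq (h ▸ hp)
      simp [this] at hpos
    · by_contra hq
      rw [hsupp t ht p q hq] at hpos
      exact lt_irrefl 0 hpos
  -- restricted eigen-inequality
  set u' : Fin n → ℝ := fun y => if y ∈ c then u y else 0 with hu'
  have hu'0 : ∀ i, 0 ≤ u' i := by
    intro i; rw [hu']; dsimp only; split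
    · exact hu i
    · exact le_refl 0
  have heig' : ∀ x, ρ * u' x ≤ ∑ y, A x y * u' y := by
    intro x
    by_cases hx : x ∈ c
    · have hsum : ∑ y, A x y * u' y = ∑ y, B x y * u y := by
        refine Finset.sum_congr rfl fun y _ => ?_
        by_cases hy : y ∈ c
        · rw [hAapp]; simp [hx, hy, hu']
        · rw [hAapp]
          simp only [hx, hy, and_false, if_false, hu', if_neg hy, zero_mul, mul_zero]
          by_contra hne
          obtain ⟨h1, h2⟩ := pos_of_mul_pos' (hB x y) (hu y)
            (lt_of_le_of_ne (mul_nonneg (hB x y) (hu y)) hne)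
          exact hy (hc.2.2 x hx y ⟨h1, h2⟩)
      rw [hsum]
      have : u' x = u x := by rw [hu']; simp [hx]
      rw [this]
      exact heig x
    · have h1 : u' x = 0 := by rw [hu']; simp [hx]
      rw [h1, mul_zero]
      exact Finset.sum_nonneg fun y _ => mul_nonneg (hA0 x y) (hu'0 y)
  -- iterated eigen-inequality
  have hiter : ∀ s x, ρ ^ s * u' x ≤ ∑ y, (A ^ s) x y * u' y := by
    intro s
    induction s with
    | zero =>
      intro x
      simp [Matrix.one_apply]
    | succ s ih =>
      intro x
      rw [pow_succ, pow_succ]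
      have h1 : ∑ y, (A ^ s * A) x y * u' y = ∑ q, (A ^ s) x q * (∑ y, A q y * u' y) := by
        simp_rw [Matrix.mul_apply, Finset.sum_mul, Finset.mul_sum]
        rw [Finset.sum_comm]
        exact Finset.sum_congr rfl fun q _ => Finset.sum_congr rfl fun y _ => mul_assoc _ _ _
      rw [h1]
      have h2 : ∑ q, (A ^ s) x q * (ρ * u' q) ≤ ∑ q, (A ^ s) x q * (∑ y, A q y * u' y) :=
        Finset.sum_le_sum fun q _ => mul_le_mul_of_nonneg_left (heig' q)
          (pow_entry_nonneg A hA0 s x q)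
      have h3 : ρ ^ s * ρ * u' x = ρ * (ρ ^ s * u' x) := by ring
      have h4 : ∑ q, (A ^ s) x q * (ρ * u' q) = ρ * ∑ q, (A ^ s) x q * u' q := by
        rw [Finset.mul_sum]; exact Finset.sum_congr rfl fun q _ => by ring
      rw [h3]
      calc ρ * (ρ ^ s * u' x) ≤ ρ * ∑ q, (A ^ s) x q * u' q :=
            mul_le_mul_of_nonneg_left (ih x) hρpos.le
        _ = ∑ q, (A ^ s) x q * (ρ * u' q) := h4.symm
        _ ≤ _ := h2
  -- reach via powers
  have hRT : ∀ p q : Fin n, p ∈ c → Relation.ReflTransGen E p q → ∃ t, 0 < (A ^ t) p q := by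
    intro p q hp hpq
    induction hpq with
    | refl => exact ⟨0, by simp [Matrix.one_apply]⟩
    | @tail b q hpb hbq ih =>
      obtain ⟨t, ht⟩ := ih
      have hbc : b ∈ c := hmemc t p b hp ht
      have hqc : q ∈ c := hc.2.2 b hbc q hbq
      have hAbq : 0 < A b q := by rw [hAapp]; simp [hbc, hqc]; exact hbq.1
      refine ⟨t + 1, lt_of_lt_of_le (mul_pos ht hAbq) ?_⟩
      rw [pow_succ]
      exact mul_single_le _ _ (pow_entry_nonneg A hA0 t) hA0 p b q
  obtain ⟨x, hx⟩ := hc.1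
  have hux : 0 < u x := hc.2.1 x hx
  -- return times
  set R : Set ℕ := {t | 0 < t ∧ 0 < (A ^ t) x x} with hR
  have hadd : ∀ a ∈ R, ∀ b ∈ R, a + b ∈ R := by
    rintro a ⟨ha1, ha2⟩ b ⟨hb1, hb2⟩
    refine ⟨by omega, lt_of_lt_of_le (mul_pos ha2 hb2) ?_⟩
    rw [pow_add]
    exact mul_single_le _ _ (pow_entry_nonneg A hA0 a) (pow_entry_nonneg A hA0 b) x x x
  have hRpos : ∀ a ∈ R, 0 < a := fun a ha => ha.1
  have hRne : ∃ r, r ∈ R := by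
    obtain ⟨y, hy⟩ := hout x hux
    have hyc : y ∈ c := hc.2.2 x hx y hy
    obtain ⟨t, ht⟩ := hRT y x hyc (hconn y hyc x hx)
    have hAxy : 0 < A x y := by rw [hAapp]; simp [hx, hyc]; exact hy.1
    refine ⟨1 + t, by omega, lt_of_lt_of_le (mul_pos hAxy ht) ?_⟩
    rw [pow_add, pow_one]
    exact mul_single_le _ _ hA0 (pow_entry_nonneg A hA0 t) x y x
  obtain ⟨r, hrR⟩ := hRne
  obtain ⟨g, N, hgpos, hgdvd, hgN⟩ := nsl R hadd hRpos r hrR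
  -- path lengths to x
  have hpath : ∀ q : Fin n, ∃ t, q ∈ c → 0 < (A ^ t) q x := by
    intro q
    by_cases hq : q ∈ c
    · obtain ⟨t, ht⟩ := hRT q x hq (hconn q hq x hx)
      exact ⟨t, fun _ => ht⟩
    · exact ⟨0, fun h => absurd h hq⟩
  choose a ha using hpath
  set amax := Finset.univ.sup a with hamax
  set L := (N + amax + 1) * g with hL
  have hLpos : 0 < L := by positivity
  have hLR : L ∈ R := hgN (N + amax + 1) (by omega)
  have hgL : g ∣ L := dvd_mul_left g (N + amax + 1)
  -- the key claim
  have claimQ : ∀ s (q : Fin n), 1 ≤ s → 0 < (A ^ (s * L)) x q → 0 < (A ^ L) q x := by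
    intro s q hs hq
    have hqc : q ∈ c := hmemc (s * L) x q hx hq
    have haq : 0 < (A ^ (a q)) q x := ha q hqc
    have hclosed : (s * L + a q) ∈ R := by
      refine ⟨by positivity, lt_of_lt_of_le (mul_pos hq haq) ?_⟩
      rw [pow_add]
      exact mul_single_le _ _ (pow_entry_nonneg A hA0 _) (pow_entry_nonneg A hA0 _) x q x
    have hd1 : g ∣ s * L + a q := hgdvd _ hclosed
    have hd2 : g ∣ s * L := Dvd.dvd.mul_left hgL s
    have hd3 : g ∣ a q := (Nat.dvd_add_right hd2).mp hd1
    obtain ⟨e, he⟩ := hd3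
    have hea : e ≤ amax := by
      have h1 : a q ≤ amax := Finset.le_sup (Finset.mem_univ q)
      have h2 : e ≤ g * e := Nat.le_mul_of_pos_left e hgpos
      omega
    have hsub : L - a q = (N + amax + 1 - e) * g := by
      rw [hL, he, Nat.sub_mul, mul_comm g e]
    have hsubR : (L - a q) ∈ R := by
      rw [hsub]
      exact hgN _ (by omega)
    have haqL : a q ≤ L := by
      have h1 : a q ≤ amax := Finset.le_sup (Finset.mem_univ q)
      have h2 : N + amax + 1 ≤ (N + amax + 1) * g := Nat.le_mul_of_pos_right _ hgpos
      omega
    have : 0 < (A ^ (a q + (L - a q))) q x := by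
      refine lt_of_lt_of_le (mul_pos haq hsubR.2) ?_
      rw [pow_add]
      exact mul_single_le _ _ (pow_entry_nonneg A hA0 _) (pow_entry_nonneg A hA0 _) q x x
    rwa [Nat.add_sub_cancel' haqL] at this
  -- the minimum constant
  set c' := c.filter (fun q => 0 < (A ^ L) q x) with hc'2
  have hxc' : x ∈ c' := Finset.mem_filter.mpr ⟨hx, hLR.2⟩
  set f : Fin n → ℝ := fun q => (A ^ L) q x * u x / (ρ ^ L * u q) with hf
  set ε := (c'.image f).min' ⟨f x, Finset.mem_image_of_mem f hxc'⟩ with hε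
  have hεmem := Finset.min'_mem (c'.image f) ⟨f x, Finset.mem_image_of_mem f hxc'⟩
  have hεpos : 0 < ε := by
    rw [← hε] at hεmem
    obtain ⟨q, hq, hfq⟩ := Finset.mem_image.mp hεmem
    have hqc : q ∈ c := (Finset.mem_filter.mp hq).1
    have h1 : 0 < (A ^ L) q x := (Finset.mem_filter.mp hq).2
    have h2 : 0 < u q := hc.2.1 q hqc
    rw [← hfq, hf]
    positivity
  have hεle : ∀ q ∈ c', ε ≤ f q := fun q hq =>
    Finset.min'_le _ _ (Finset.mem_image_of_mem f hq)
  refine ⟨x, L, ε, hLpos, hεpos, ?_⟩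
  intro s hs
  obtain ⟨s', rfl⟩ := Nat.exists_eq_add_of_le hs
  -- (1 + s') * L = s' * L + L
  have hexp : (1 + s') * L = s' * L + L := by ring
  rw [hexp, pow_add (a := B), Matrix.mul_apply]
  -- per-term bound
  have hterm : ∀ q : Fin n,
      (A ^ (s' * L)) x q * (ε * (ρ ^ L * u' q) / u x) ≤ (A ^ (s' * L)) x q * (A ^ L) q x := by
    intro q
    rcases eq_or_lt_of_le (pow_entry_nonneg A hA0 (s' * L) x q) with h0 | hpos
    · rw [← h0, zero_mul, zero_mul]
    · have hqc : q ∈ c := hmemc _ x q hx hpos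
      have hALqx : 0 < (A ^ L) q x := by
        rcases Nat.eq_zero_or_pos s' with rfl | hs'
        · have : q = x := by
            rw [Nat.zero_mul, pow_zero, Matrix.one_apply] at hpos
            by_contra hne
            rw [if_neg (fun h => hne h.symm)] at hpos
            exact lt_irrefl 0 hpos
          rw [this]; exact hLR.2
        · exact claimQ s' q hs' hpos
      have hqc' : q ∈ c' := Finset.mem_filter.mpr ⟨hqc, hALqx⟩
      have huq : 0 < u q := hc.2.1 q hqc
      have hu'q : u' q = u q := by rw [hu']; simp [hqc]
      have hle : ε * (ρ ^ L * u' q) / u x ≤ (A ^ L) q x := by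
        have h1 := hεle q hqc'
        simp only [hf] at h1
        rw [hu'q, div_le_iff₀ hux]
        calc ε * (ρ ^ L * u q) ≤ (A ^ L) q x * u x / (ρ ^ L * u q) * (ρ ^ L * u q) := by
              exact mul_le_mul_of_nonneg_right h1 (by positivity)
          _ = (A ^ L) q x * u x := by field_simp
      exact mul_le_mul_of_nonneg_left hle hpos.le
  have hsum1 : ∑ q, (A ^ (s' * L)) x q * (ε * (ρ ^ L * u' q) / u x) ≤
      ∑ q, (A ^ (s' * L)) x q * (A ^ L) q x := Finset.sum_le_sum fun q _ => hterm q
  have hu'x : u' x = u x := by rw [hu']; simp [hx]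
  have hsum2 : ε * ρ ^ (s' * L + L) ≤ ∑ q, (A ^ (s' * L)) x q * (ε * (ρ ^ L * u' q) / u x) := by
    have h1 : ∑ q, (A ^ (s' * L)) x q * (ε * (ρ ^ L * u' q) / u x) =
        (ε * ρ ^ L / u x) * ∑ q, (A ^ (s' * L)) x q * u' q := by
      rw [Finset.mul_sum]
      exact Finset.sum_congr rfl fun q _ => by field_simp
    rw [h1]
    have h2 := hiter (s' * L) x
    have h3 : (ε * ρ ^ L / u x) * (ρ ^ (s' * L) * u' x) ≤
        (ε * ρ ^ L / u x) * ∑ q, (A ^ (s' * L)) x q * u' q :=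
      mul_le_mul_of_nonneg_left h2 (by positivity)
    refine le_trans (le_of_eq ?_) h3
    rw [hu'x, pow_add]
    field_simp
  -- conclude for A, then B
  have hfinA : ε * ρ ^ (s' * L + L) ≤ ∑ q, (A ^ (s' * L)) x q * (A ^ L) q x :=
    le_trans hsum2 hsum1
  refine le_trans hfinA (Finset.sum_le_sum fun q _ => ?_)
  exact mul_le_mul (pow_le_pow_entry A B hA0 hAB _ x q) (pow_le_pow_entry A B hA0 hAB _ q x)
    (pow_entry_nonneg A hA0 _ q x)
    (pow_entry_nonneg B hB _ x q)




lemma spectral [NeZero n] (B : Matrix (Fin n) (Fin n) ℝ) :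
    ∃ (μ : ℂ) (z : Fin n → ℂ), z ≠ 0 ∧ (B.map Complex.ofReal) *ᵥ z = μ • z ∧
      specRadR B ≤ ‖μ‖ := by
  set Bc := B.map (Complex.ofReal) with hBc
  have hne : (spectrum ℂ Bc).Nonempty := spectrum.nonempty Bc
  have hcpt : IsCompact (spectrum ℂ Bc) := spectrum.isCompact Bc
  obtain ⟨μ, hμmem, hμmax⟩ := hcpt.exists_isMaxOn hne continuous_norm.continuousOn
  have hle : specRadR B ≤ ‖μ‖ := by
    rw [specRadR, specRad]
    exact Real.iSup_le (fun ν => Real.iSup_le (fun hν => isMaxOn_iff.mp hμmax ν hν)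
      (norm_nonneg μ)) (norm_nonneg μ)
  have hnu : ¬ IsUnit (algebraMap ℂ (Matrix (Fin n) (Fin n) ℂ) μ - Bc) :=
    spectrum.mem_iff.mp hμmem
  have hdet : (algebraMap ℂ (Matrix (Fin n) (Fin n) ℂ) μ - Bc).det = 0 := by
    by_contra h
    exact hnu ((Matrix.isUnit_iff_isUnit_det _).mpr (isUnit_iff_ne_zero.mpr h))
  obtain ⟨z, hz0, hzv⟩ := (Matrix.exists_mulVec_eq_zero_iff).mpr hdet
  refine ⟨μ, z, hz0, ?_, hle⟩
  have h1 : (algebraMap ℂ (Matrix (Fin n) (Fin n) ℂ) μ - Bc) *ᵥ z =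
      (algebraMap ℂ (Matrix (Fin n) (Fin n) ℂ) μ) *ᵥ z - Bc *ᵥ z := Matrix.sub_mulVec _ _ _
  have h2 : (algebraMap ℂ (Matrix (Fin n) (Fin n) ℂ) μ) *ᵥ z = μ • z := by
    rw [Algebra.algebraMap_eq_smul_one, Matrix.smul_mulVec, Matrix.one_mulVec]
  rw [hzv, h2] at h1
  exact (sub_eq_zero.mp h1.symm).symm

lemma specRadR_le_one [NeZero n] (B : Matrix (Fin n) (Fin n) ℝ)
    (h1 : ∀ i, ∑ j, |B i j| ≤ 1) : specRadR B ≤ 1 := by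
  set Bc := B.map (Complex.ofReal) with hBc
  have hnorm : ‖Bc‖ ≤ 1 := by
    rw [Matrix.linfty_opNorm_def]
    rw [show (1 : ℝ) = ((1 : NNReal) : ℝ) by norm_num, NNReal.coe_le_coe]
    refine Finset.sup_le fun i _ => ?_
    rw [← NNReal.coe_le_coe]
    push_cast
    calc ∑ j, ‖Bc i j‖ = ∑ j, |B i j| := by
          refine Finset.sum_congr rfl fun j _ => ?_
          simp [hBc, Matrix.map_apply, Complex.norm_real, Real.norm_eq_abs]
      _ ≤ 1 := h1 i
  rw [specRadR, specRad]
  exact Real.iSup_le (fun ν => Real.iSup_le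
    (fun hν => le_trans (spectrum.norm_le_norm_of_mem hν) hnorm) zero_le_one) zero_le_one


end StmtAux

open StmtAux

set_option maxHeartbeats 1000000 in
theorem stmt_10 {m : ℕ} (M : Matrix (Fin m) (Fin m) ℝ)
    (hMnn : ∀ i j, 0 ≤ M i j) (hrow : ∀ i, ∑ j, M i j = 1) (hirr : Irred M)
    (d : Fin m → ℝ) (hd : ∀ i, 0 ≤ d i ∧ d i ≤ 1)
    (hD0 : ∃ i, d i ≠ 0) (hDI : ∃ i, d i ≠ 1)
    (hρ : 0 < specRadR (Matrix.diagonal d * M)) :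
    ∃ η : ℝ, 0 < η ∧ ∃ j k : Fin m, ∃ l : ℕ, 0 < l ∧ ∃ N : ℕ,
      ∀ i : ℕ, N ≤ i → ∃ l' : ℕ, l' < l ∧
        η * specRadR (Matrix.diagonal d * M) ^ i ≤
          ((Matrix.diagonal d * M) ^ (i + l') *
            ((1 - Matrix.diagonal d) * M)) j k := by
  classical
  obtain ⟨i₀, _⟩ := hD0
  haveI : NeZero m := ⟨by have := i₀.2; omega⟩
  set B := Matrix.diagonal d * M with hBdef
  have hBent : ∀ i j, B i j = d i * M i j := fun i j => by
    rw [hBdef, Matrix.diagonal_mul]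
  have hB : ∀ i j, 0 ≤ B i j := fun i j => by
    rw [hBent]; exact mul_nonneg (hd i).1 (hMnn i j)
  set ρ := specRadR B with hρdef
  have hρpos : 0 < ρ := hρ
  have hρ1 : ρ ≤ 1 := by
    refine specRadR_le_one B fun i => ?_
    have h1 : ∀ j, |B i j| = d i * M i j := fun j => by
      rw [hBent]; exact abs_of_nonneg (mul_nonneg (hd i).1 (hMnn i j))
    calc ∑ j, |B i j| = ∑ j, d i * M i j := Finset.sum_congr rfl fun j _ => h1 j
      _ = d i * ∑ j, M i j := by rw [Finset.mul_sum]
      _ = d i := by rw [hrow i, mul_one]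
      _ ≤ 1 := (hd i).2
  obtain ⟨μ, z, hz0, hzeq, hμge⟩ := spectral B
  set ρ' := ‖μ‖ with hρ'def
  have hρ'pos : 0 < ρ' := lt_of_lt_of_le hρpos hμge
  set u : Fin m → ℝ := fun k => ‖z k‖ with hudef
  have hu : ∀ i, 0 ≤ u i := fun i => norm_nonneg _
  have hune : ∃ i, 0 < u i := by
    obtain ⟨i, hi⟩ := Function.ne_iff.mp hz0
    exact ⟨i, norm_pos_iff.mpr hi⟩
  have heig : ∀ x, ρ' * u x ≤ ∑ y, B x y * u y := by
    intro x
    have h2 : ((B.map Complex.ofReal) *ᵥ z) x = ∑ y, ((B x y : ℂ)) * z y := by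
      simp [Matrix.mulVec, dotProduct, Matrix.map_apply]
    have h1 : (μ • z) x = μ * z x := rfl
    calc ρ' * u x = ‖μ * z x‖ := (norm_mul μ (z x)).symm
      _ = ‖∑ y, ((B x y : ℂ)) * z y‖ := by rw [← h1, ← hzeq, h2]
      _ ≤ ∑ y, ‖((B x y : ℂ)) * z y‖ := norm_sum_le _ _
      _ = ∑ y, B x y * u y := by
          refine Finset.sum_congr rfl fun y _ => ?_
          rw [norm_mul, Complex.norm_real, Real.norm_eq_abs, abs_of_nonneg (hB x y)]
  obtain ⟨x, L, ε, hLpos, hεpos, hcore⟩ := core B hB ρ' hρ'pos u hu hune heig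
  -- routing: from x we can reach a state with d < 1
  have hxRch : ∃ t, 0 < (B ^ t) x x := ⟨0, by simp [Matrix.one_apply]⟩
  have hreach : ∃ q, (∃ t, 0 < (B ^ t) x q) ∧ d q < 1 := by
    by_contra hcon
    push_neg at hcon
    have hall : ∀ y, (∃ t, 0 < (B ^ t) x y) → d y = 1 := fun y hy =>
      le_antisymm (hd y).2 (hcon y hy)
    have hstep : ∀ nn (y w : Fin m), (∃ t, 0 < (B ^ t) x y) → 0 < (M ^ nn) y w →
        (∃ t, 0 < (B ^ t) x w) := by
      intro nn
      induction nn with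
      | zero =>
        intro y w hy hpos
        rw [pow_zero, Matrix.one_apply] at hpos
        have hyw : y = w := by
          by_contra hne
          rw [if_neg hne] at hpos
          exact lt_irrefl 0 hpos
        rwa [← hyw]
      | succ nn ih =>
        intro y w hy hpos
        rw [pow_succ', Matrix.mul_apply] at hpos
        obtain ⟨q, hq⟩ := exists_pos_term
          (fun q => mul_nonneg (hMnn y q) (pow_entry_nonneg M hMnn nn q w)) hpos
        obtain ⟨hq1, hq2⟩ := pos_of_mul_pos' (hMnn y q)
          (pow_entry_nonneg M hMnn nn q w) hq
        have hqR : (∃ t, 0 < (B ^ t) x q) := by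
          have hdy : d y = 1 := hall y hy
          obtain ⟨t, ht⟩ := hy
          have hByq : 0 < B y q := by rw [hBent, hdy, one_mul]; exact hq1
          refine ⟨t + 1, lt_of_lt_of_le (mul_pos ht hByq) ?_⟩
          rw [pow_succ]
          exact mul_single_le _ _ (pow_entry_nonneg B hB t) hB x y q
        exact ih q w hqR hq2
    obtain ⟨y₀, hy₀⟩ := hDI
    obtain ⟨nn, _, hnnpos⟩ := hirr x y₀
    exact hy₀ (hall y₀ (hstep nn x y₀ hxRch hnnpos))
  obtain ⟨qs, ⟨t₀, ht₀⟩, hq1⟩ := hreach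
  obtain ⟨k, hk⟩ := exists_pos_term (hMnn qs) (by rw [hrow qs]; norm_num)
  set C := (1 - Matrix.diagonal d) * M with hCdef
  have hCent : ∀ i j, C i j = (1 - d i) * M i j := by
    intro i j
    have hdiag : (1 : Matrix (Fin m) (Fin m) ℝ) - Matrix.diagonal d =
        Matrix.diagonal (fun i => 1 - d i) := by
      rw [← Matrix.diagonal_one, Matrix.diagonal_sub]
    rw [hCdef, hdiag, Matrix.diagonal_mul]
  have hC : ∀ i j, 0 ≤ C i j := fun i j => by
    rw [hCent]; exact mul_nonneg (by linarith [(hd i).2]) (hMnn i j)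
  set w := (B ^ t₀) x qs * C qs k with hwdef
  have hwpos : 0 < w := by
    rw [hwdef]
    exact mul_pos ht₀ (by rw [hCent]; exact mul_pos (by linarith) hk)
  refine ⟨ε * w * ρ ^ L, by positivity, x, k, L, hLpos, t₀ + L, ?_⟩
  intro i hi
  set aN := i - t₀ with haN
  have hiaN : i = t₀ + aN := by omega
  have haL : L ≤ aN := by omega
  have hl'lt : (L - aN % L) % L < L := Nat.mod_lt _ hLpos
  refine ⟨(L - aN % L) % L, hl'lt, ?_⟩
  set l' := (L - aN % L) % L with hl'
  have hdvd : L ∣ (aN + l') := by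
    rcases Nat.eq_zero_or_pos (aN % L) with h0 | hpos0
    · have hz : l' = 0 := by rw [hl', h0, Nat.sub_zero, Nat.mod_self]
      rw [hz, add_zero]
      exact Nat.dvd_of_mod_eq_zero h0
    · have hmlt : aN % L < L := Nat.mod_lt _ hLpos
      have hl'eq : l' = L - aN % L := by
        rw [hl']; exact Nat.mod_eq_of_lt (by omega)
      apply Nat.dvd_of_mod_eq_zero
      rw [Nat.add_mod, hl'eq, Nat.mod_eq_of_lt (show L - aN % L < L by omega)]
      rw [show aN % L + (L - aN % L) = L by omega, Nat.mod_self]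
  obtain ⟨s, hs⟩ := hdvd
  rw [mul_comm] at hs
  have hspos : 1 ≤ s := by
    rcases Nat.eq_zero_or_pos s with rfl | h
    · rw [zero_mul] at hs; omega
    · exact h
  have hiexp : i + l' = s * L + t₀ := by omega
  have hBC : ∀ i j, 0 ≤ (B ^ t₀ * C) i j := fun i j => by
    rw [Matrix.mul_apply]
    exact Finset.sum_nonneg fun q _ => mul_nonneg (pow_entry_nonneg B hB t₀ i q) (hC q j)
  have h1 : (B ^ (s * L)) x x * ((B ^ t₀ * C) x k) ≤ (B ^ (s * L) * (B ^ t₀ * C)) x k :=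
    mul_single_le _ _ (pow_entry_nonneg B hB _) hBC x x k
  have h2 : w ≤ (B ^ t₀ * C) x k := by
    rw [hwdef]
    exact mul_single_le _ _ (pow_entry_nonneg B hB t₀) hC x qs k
  have h3 : ε * ρ' ^ (s * L) ≤ (B ^ (s * L)) x x := hcore s hspos
  have h4 : ρ ^ (s * L) ≤ ρ' ^ (s * L) := pow_le_pow_left₀ hρpos.le hμge _
  have h5 : ρ ^ (i + L) ≤ ρ ^ (s * L) :=
    pow_le_pow_of_le_one hρpos.le hρ1 (by omega)
  calc ε * w * ρ ^ L * ρ ^ i = (ε * ρ ^ (i + L)) * w := by rw [pow_add]; ring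
    _ ≤ (ε * ρ ^ (s * L)) * w := by
        have := mul_le_mul_of_nonneg_left h5 hεpos.le
        exact mul_le_mul_of_nonneg_right this hwpos.le
    _ ≤ (ε * ρ' ^ (s * L)) * w := by
        have := mul_le_mul_of_nonneg_left h4 hεpos.le
        exact mul_le_mul_of_nonneg_right this hwpos.le
    _ ≤ (B ^ (s * L)) x x * w := mul_le_mul_of_nonneg_right h3 hwpos.le
    _ ≤ (B ^ (s * L)) x x * ((B ^ t₀ * C) x k) :=
        mul_le_mul_of_nonneg_left h2 (pow_entry_nonneg B hB _ x x)
    _ ≤ (B ^ (s * L) * (B ^ t₀ * C)) x k := h1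
    _ = (B ^ (i + l') * C) x k := by rw [hiexp, pow_add, Matrix.mul_assoc]
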